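/- Let ρ̂ be a full-rank density matrix on ℂ^d, let n ≥ 1, let F_n be a nonempty set of density matrices on ℂ^{d^n}, let F' be a set of density matrices on ℂ^{d'}, and let E : M_{d^n}(ℂ) → M_{d'}(ℂ) be a positive trace-preserving linear map with E(ω) ∈ F' for all ω ∈ F_n. If a unit vector ψ ∈ ℂ^{d'} and ε ≥ 0 satisfy ⟨ψ, E(ρ̂^{⊗n}) ψ⟩ ≥ 1 − ε, then ε ≥ λ_min(ρ̂)^n · (1 − f_ψ), where f_ψ := sup_{ω ∈ F'} ⟨ψ, ω ψ⟩. Equivalently, if ε > 0 and λ_min(ρ̂) < 1, then n ≥ log((1 − f_ψ)/ε) / log(1/λ_min(ρ̂)). (Theorem 2, deterministic case: lower bound on distillation overhead.) -/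

import Mathlib

open scoped Matrix ComplexOrder

noncomputable section

/-- A density matrix: a positive semidefinite complex matrix with unit trace. -/
def IsDensity {n : Type*} [Fintype n] (A : Matrix n n ℂ) : Prop :=
  A.PosSemidef ∧ A.trace = 1

/-- The smallest eigenvalue of a Hermitian matrix (`0` by convention otherwise). -/
noncomputable def minEig {n : Type*} [Fintype n] [DecidableEq n] (A : Matrix n n ℂ) : ℝ :=
  letI := Classical.propDecidable A.IsHermitian
  if h : A.IsHermitian then ⨅ i, h.eigenvalues i else 0

/-- The overlap `⟨ψ, A ψ⟩` (as a real number). -/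
noncomputable def overlap {n : Type*} [Fintype n] (A : Matrix n n ℂ) (ψ : n → ℂ) : ℝ :=
  (dotProduct (star ψ) (A.mulVec ψ)).re

/-- `f_ψ = sup_{ω ∈ F} ⟨ψ, ω ψ⟩`, with the convention `sup ∅ = 0`. -/
noncomputable def maxOverlap {n : Type*} [Fintype n] (F : Set (Matrix n n ℂ)) (ψ : n → ℂ) : ℝ :=
  sSup ((fun ω => overlap ω ψ) '' F)

/-- A positive map: it sends positive semidefinite matrices to positive semidefinite matrices. -/
def PosMap {n m : Type*} [Fintype n] [Fintype m]
    (Φ : Matrix n n ℂ →ₗ[ℂ] Matrix m m ℂ) : Prop :=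
  ∀ X, X.PosSemidef → (Φ X).PosSemidef

/-- A trace-preserving map. -/
def TracePreserving {n m : Type*} [Fintype n] [Fintype m]
    (Φ : Matrix n n ℂ →ₗ[ℂ] Matrix m m ℂ) : Prop :=
  ∀ X, (Φ X).trace = X.trace

/-- The `n`-fold Kronecker power of a `d × d` matrix, realized on the index type
`Fin n → Fin d` (canonically identifying `ℂ^{d^n} ≅ (ℂ^d)^{⊗n}`). -/
noncomputable def kronPow {d : ℕ} (A : Matrix (Fin d) (Fin d) ℂ) (n : ℕ) :
    Matrix (Fin n → Fin d) (Fin n → Fin d) ℂ :=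
  Matrix.of fun x y => ∏ i, A (x i) (y i)

namespace DistillAux

open Matrix

variable {m : Type*} [Fintype m] [DecidableEq m]

lemma conj_diag_psd {U : Matrix m m ℂ} (hU : U ∈ Matrix.unitaryGroup m ℂ)
    {g : m → ℝ} (hg : ∀ i, 0 ≤ g i) :
    (U * Matrix.diagonal (fun i => (g i : ℂ)) * star U).PosSemidef := by
  have h : (Matrix.diagonal (fun i => (g i : ℂ))).PosSemidef :=
    Matrix.posSemidef_diagonal_iff.mpr fun i => by
      rw [Complex.le_def]; simp [hg i]
  simpa [Matrix.star_eq_conjTranspose] using h.mul_mul_conjTranspose_same U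

lemma sub_smul_one_decomp {A : Matrix m m ℂ} (hA : A.IsHermitian) (c : ℝ) :
    A - (c : ℂ) • 1 =
      (hA.eigenvectorUnitary : Matrix m m ℂ) *
        Matrix.diagonal (fun i => ((hA.eigenvalues i - c : ℝ) : ℂ)) *
        star (hA.eigenvectorUnitary : Matrix m m ℂ) := by
  set U := (hA.eigenvectorUnitary : Matrix m m ℂ) with hUdef
  have hU : U * star U = 1 := Unitary.coe_mul_star_self _
  have h1 : (c : ℂ) • (1 : Matrix m m ℂ) = U * ((c : ℂ) • 1) * star U := by
    rw [Matrix.mul_smul, Matrix.smul_mul, mul_one, hU]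
  calc A - (c : ℂ) • 1
      = U * Matrix.diagonal (RCLike.ofReal ∘ hA.eigenvalues) * star U
          - U * ((c : ℂ) • 1) * star U := by
        have hs := hA.spectral_theorem
        rw [Unitary.conjStarAlgAut_apply] at hs
        rw [← hs, ← h1]
    _ = U * (Matrix.diagonal (RCLike.ofReal ∘ hA.eigenvalues) - (c : ℂ) • 1) * star U := by
        rw [Matrix.mul_sub, Matrix.sub_mul]
    _ = _ := by
        congr 2
        rw [Matrix.smul_one_eq_diagonal, Matrix.diagonal_sub]
        congr 1
        funext i
        simp

lemma sub_smul_one_psd {A : Matrix m m ℂ} (hA : A.IsHermitian) {c : ℝ}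
    (h : ∀ i, c ≤ hA.eigenvalues i) : (A - (c : ℂ) • 1).PosSemidef := by
  rw [sub_smul_one_decomp hA c]
  exact conj_diag_psd hA.eigenvectorUnitary.2 fun i => sub_nonneg.mpr (h i)

lemma smul_one_sub_psd {A : Matrix m m ℂ} (hA : A.IsHermitian) {c : ℝ}
    (h : ∀ i, hA.eigenvalues i ≤ c) : ((c : ℂ) • 1 - A).PosSemidef := by
  have hd : (c : ℂ) • 1 - A =
      (hA.eigenvectorUnitary : Matrix m m ℂ) *
        Matrix.diagonal (fun i => ((c - hA.eigenvalues i : ℝ) : ℂ)) *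
        star (hA.eigenvectorUnitary : Matrix m m ℂ) := by
    have := sub_smul_one_decomp hA c
    have h2 : (c : ℂ) • 1 - A = -(A - (c : ℂ) • 1) := by rw [neg_sub]
    rw [h2, this, ← Matrix.neg_mul, ← Matrix.mul_neg, Matrix.diagonal_neg]
    have he : (fun i => -((hA.eigenvalues i - c : ℝ) : ℂ))
        = fun i => ((c - hA.eigenvalues i : ℝ) : ℂ) := by
      funext i; push_cast; ring
    rw [he]
  rw [hd]
  exact conj_diag_psd hA.eigenvectorUnitary.2 fun i => sub_nonneg.mpr (h i)

lemma trace_eq_sum_eigenvalues {A : Matrix m m ℂ} (hA : A.IsHermitian) :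
    A.trace = ∑ i, (hA.eigenvalues i : ℂ) := by
  nth_rewrite 1 [hA.spectral_theorem]
  rw [Unitary.conjStarAlgAut_apply, Matrix.trace_mul_cycle, Unitary.coe_star_mul_self, one_mul, Matrix.trace_diagonal]
  rfl

lemma trace_smul_one_sub_psd {σ : Matrix m m ℂ} (hσ : σ.PosSemidef) :
    ((σ.trace.re : ℂ) • 1 - σ).PosSemidef := by
  apply smul_one_sub_psd hσ.1
  intro i
  have hsum : σ.trace.re = ∑ j, hσ.1.eigenvalues j := by
    rw [trace_eq_sum_eigenvalues hσ.1]; simp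
  rw [hsum]
  exact Finset.single_le_sum (fun j _ => hσ.eigenvalues_nonneg j) (Finset.mem_univ i)

end DistillAux

namespace DistillAux
open Matrix Kronecker

variable {m : Type*} [Fintype m] [DecidableEq m]

lemma overlap_nonneg {σ : Matrix m m ℂ} (hσ : σ.PosSemidef) (ψ : m → ℂ) :
    0 ≤ overlap σ ψ := by
  have := (Complex.le_def.mp (hσ.dotProduct_mulVec_nonneg ψ)).1
  simpa [overlap] using this

lemma overlap_add (A B : Matrix m m ℂ) (ψ : m → ℂ) :
    overlap (A + B) ψ = overlap A ψ + overlap B ψ := by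
  simp [overlap, Matrix.add_mulVec, dotProduct_add]

lemma overlap_sub (A B : Matrix m m ℂ) (ψ : m → ℂ) :
    overlap (A - B) ψ = overlap A ψ - overlap B ψ := by
  simp [overlap, Matrix.sub_mulVec, dotProduct_sub]

lemma overlap_smul (r : ℝ) (A : Matrix m m ℂ) (ψ : m → ℂ) :
    overlap ((r : ℂ) • A) ψ = r * overlap A ψ := by
  simp [overlap, Matrix.smul_mulVec, dotProduct_smul, Complex.re_ofReal_mul]

lemma overlap_one {ψ : m → ℂ} (hψ : dotProduct (star ψ) ψ = 1) :
    overlap (1 : Matrix m m ℂ) ψ = 1 := by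
  simp [overlap, Matrix.one_mulVec, hψ]

lemma overlap_le_trace_re {σ : Matrix m m ℂ} (hσ : σ.PosSemidef) {ψ : m → ℂ}
    (hψ : dotProduct (star ψ) ψ = 1) : overlap σ ψ ≤ σ.trace.re := by
  have h := overlap_nonneg (trace_smul_one_sub_psd hσ) ψ
  rw [overlap_sub, overlap_smul, overlap_one hψ, mul_one] at h
  linarith

lemma psd_kron {p q : Type*} [Fintype p] [Fintype q]
    {A : Matrix p p ℂ} {B : Matrix q q ℂ} (hA : A.PosSemidef) (hB : B.PosSemidef) :
    (A ⊗ₖ B).PosSemidef := by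
  exact hA.kronecker hB

lemma psd_real_smul {A : Matrix m m ℂ} (hA : A.PosSemidef) {r : ℝ} (hr : 0 ≤ r) :
    ((r : ℂ) • A).PosSemidef := by
  refine .of_dotProduct_mulVec_nonneg ?_ fun x => ?_
  · simp [Matrix.IsHermitian, Matrix.conjTranspose_smul, Complex.star_def,
      Complex.conj_ofReal, hA.1.eq]
  · rw [Matrix.smul_mulVec, dotProduct_smul]
    refine smul_nonneg ?_ (hA.dotProduct_mulVec_nonneg x)
    rw [Complex.le_def]; simp [hr]

def snocE (n d : ℕ) : (Fin n → Fin d) × Fin d ≃ (Fin (n + 1) → Fin d) where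
  toFun p := Fin.snoc p.1 p.2
  invFun g := (Fin.init g, g (Fin.last n))
  left_inv p := by simp
  right_inv g := by simp [Fin.snoc_init_self]

lemma kronPow_zero {d : ℕ} (A : Matrix (Fin d) (Fin d) ℂ) : kronPow A 0 = 1 := by
  ext x y
  have hxy : x = y := funext fun i => i.elim0
  subst hxy
  simp [kronPow, Matrix.one_apply]

lemma kronPow_succ {d : ℕ} (A : Matrix (Fin d) (Fin d) ℂ) (n : ℕ) :
    kronPow A (n + 1) =
      ((kronPow A n) ⊗ₖ A).submatrix (snocE n d).symm (snocE n d).symm := by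
  ext x y
  simp only [kronPow, Matrix.submatrix_apply, Matrix.kroneckerMap_apply, Matrix.of_apply,
    snocE, Equiv.coe_fn_symm_mk]
  rw [Fin.prod_univ_castSucc]
  rfl

lemma trace_submatrix_equiv {p q : Type*} [Fintype p] [Fintype q]
    (e : p ≃ q) (M : Matrix q q ℂ) : (M.submatrix e e).trace = M.trace := by
  simp only [Matrix.trace, Matrix.diag, Matrix.submatrix_apply]
  exact Fintype.sum_equiv e _ _ fun i => rfl

lemma trace_kronPow {d : ℕ} (A : Matrix (Fin d) (Fin d) ℂ) (n : ℕ) :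
    (kronPow A n).trace = A.trace ^ n := by
  induction n with
  | zero =>
      rw [kronPow_zero, Matrix.trace_one, pow_zero]
      simp
  | succ n ih =>
      rw [kronPow_succ, trace_submatrix_equiv, Matrix.trace_kronecker, ih, pow_succ]

lemma kronPow_psd {d : ℕ} {A : Matrix (Fin d) (Fin d) ℂ} (hA : A.PosSemidef) (n : ℕ) :
    (kronPow A n).PosSemidef := by
  induction n with
  | zero => rw [kronPow_zero]; exact .one
  | succ n ih => rw [kronPow_succ]; exact (psd_kron ih hA).submatrix _

lemma kronPow_sub_psd {d : ℕ} {A : Matrix (Fin d) (Fin d) ℂ} (hA : A.PosSemidef)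
    {c : ℝ} (hc : 0 ≤ c) (hAc : (A - (c : ℂ) • 1).PosSemidef) (n : ℕ) :
    (kronPow A n - ((c ^ n : ℝ) : ℂ) • 1).PosSemidef := by
  induction n with
  | zero =>
      rw [kronPow_zero, pow_zero, Complex.ofReal_one, one_smul, sub_self]
      exact .zero
  | succ n ih =>
      have key : (kronPow A n ⊗ₖ A) - ((c ^ (n + 1) : ℝ) : ℂ) • 1 =
          ((kronPow A n - ((c ^ n : ℝ) : ℂ) • 1) ⊗ₖ A) +
            ((c ^ n : ℝ) : ℂ) • ((1 : Matrix (Fin n → Fin d) (Fin n → Fin d) ℂ) ⊗ₖ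
              (A - (c : ℂ) • 1)) := by
        ext ⟨x1, x2⟩ ⟨y1, y2⟩
        simp only [Matrix.kroneckerMap_apply, Matrix.sub_apply, Matrix.smul_apply,
          Matrix.add_apply, Matrix.one_apply, Prod.mk.injEq, smul_eq_mul]
        push_cast
        by_cases h1 : x1 = y1 <;> by_cases h2 : x2 = y2 <;>
          simp [h1, h2] <;> ring
      have h2 : ((kronPow A n ⊗ₖ A) - ((c ^ (n + 1) : ℝ) : ℂ) • 1).PosSemidef := by
        rw [key]
        exact (psd_kron ih hA).add
          (psd_real_smul (psd_kron Matrix.PosSemidef.one hAc) (pow_nonneg hc n))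
      rw [kronPow_succ, ← Matrix.submatrix_one_equiv (snocE n d).symm]
      exact h2.submatrix _

lemma density_one_sub_psd {ω : Matrix m m ℂ} (hω : IsDensity ω) :
    ((1 : Matrix m m ℂ) - ω).PosSemidef := by
  have h := trace_smul_one_sub_psd hω.1
  rw [hω.2] at h
  simpa using h

end DistillAux

open DistillAux Matrix Kronecker in
/-- **Theorem 2, deterministic case.**  Lower bound on the distillation overhead:
`ε ≥ λ_min(ρ̂)^n (1 - f_ψ)`; equivalently, if `ε > 0` and `λ_min(ρ̂) < 1`, then
`n ≥ log((1 - f_ψ)/ε) / log(1/λ_min(ρ̂))`. -/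
theorem distillation_overhead_deterministic {d d' : ℕ}
    (ρhat : Matrix (Fin d) (Fin d) ℂ) (hρ : IsDensity ρhat) (hρfull : 0 < minEig ρhat)
    (n : ℕ) (hn : 1 ≤ n)
    (Fn : Set (Matrix (Fin n → Fin d) (Fin n → Fin d) ℂ)) (hFnne : Fn.Nonempty)
    (hFnden : ∀ ω ∈ Fn, IsDensity ω)
    (F' : Set (Matrix (Fin d') (Fin d') ℂ)) (hF'den : ∀ ω ∈ F', IsDensity ω)
    (E : Matrix (Fin n → Fin d) (Fin n → Fin d) ℂ →ₗ[ℂ] Matrix (Fin d') (Fin d') ℂ)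
    (hEpos : PosMap E) (hEtp : TracePreserving E)
    (hEfree : ∀ ω ∈ Fn, E ω ∈ F')
    (ψ : Fin d' → ℂ) (hψ : dotProduct (star ψ) ψ = 1)
    (ε : ℝ) (hε : 0 ≤ ε)
    (hfid : 1 - ε ≤ overlap (E (kronPow ρhat n)) ψ) :
    minEig ρhat ^ n * (1 - maxOverlap F' ψ) ≤ ε ∧
    (0 < ε → minEig ρhat < 1 →
      Real.log ((1 - maxOverlap F' ψ) / ε) / Real.log (1 / minEig ρhat) ≤ (n : ℝ)) := by
  classical
  have hherm : ρhat.IsHermitian := hρ.1.1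
  set lam := minEig ρhat with hlamdef
  -- lam is a lower bound on the eigenvalues
  have hminle : ∀ i, lam ≤ hherm.eigenvalues i := by
    intro i
    have h1 : lam = ⨅ j, hherm.eigenvalues j := by
      rw [hlamdef, minEig, dif_pos hherm]
    rw [h1]
    exact ciInf_le (Finite.bddBelow_range _) i
  have hAc : (ρhat - (lam : ℂ) • 1).PosSemidef := sub_smul_one_psd hherm hminle
  -- the free state
  obtain ⟨ω, hω⟩ := hFnne
  have hωden := hFnden ω hω
  set c : ℝ := lam ^ n with hcdef
  have hc0 : 0 ≤ c := le_of_lt (pow_pos hρfull n)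
  -- Δ := ρ^{⊗n} - c ω is PSD
  set Δ : Matrix (Fin n → Fin d) (Fin n → Fin d) ℂ :=
    kronPow ρhat n - (c : ℂ) • ω with hΔdef
  have hΔpsd : Δ.PosSemidef := by
    have h1 := kronPow_sub_psd hρ.1 (le_of_lt hρfull) hAc n
    have h2 := psd_real_smul (density_one_sub_psd hωden) hc0
    have h3 : Δ = (kronPow ρhat n - ((lam ^ n : ℝ) : ℂ) • 1) +
        (c : ℂ) • ((1 : Matrix (Fin n → Fin d) (Fin n → Fin d) ℂ) - ω) := by
      rw [hΔdef, hcdef, smul_sub]; abel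
    rw [h3]
    exact h1.add h2
  -- trace of Δ
  have hTrΔ : Δ.trace = 1 - (c : ℂ) := by
    rw [hΔdef, Matrix.trace_sub, Matrix.trace_smul, trace_kronPow, hρ.2, one_pow,
      hωden.2, smul_eq_mul, mul_one]
  -- overlap of E Δ number
  have hEΔpsd := hEpos Δ hΔpsd
  have hEΔ : overlap (E Δ) ψ ≤ 1 - c := by
    have h := overlap_le_trace_re hEΔpsd hψ
    rw [hEtp Δ, hTrΔ] at h
    simpa using h
  -- bounding the overlap with free states
  have htr1 : ∀ ω' ∈ F', overlap ω' ψ ≤ 1 := by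
    intro ω' hω'
    have h := overlap_le_trace_re (hF'den ω' hω').1 hψ
    rw [(hF'den ω' hω').2] at h
    simpa using h
  have hbdd : BddAbove ((fun ω' => overlap ω' ψ) '' F') := by
    refine ⟨1, ?_⟩
    rintro x ⟨ω', hω', rfl⟩
    exact htr1 ω' hω'
  have hfle : overlap (E ω) ψ ≤ maxOverlap F' ψ :=
    le_csSup hbdd ⟨E ω, hEfree ω hω, rfl⟩
  have hf1 : maxOverlap F' ψ ≤ 1 := by
    apply Real.sSup_le _ zero_le_one
    rintro x ⟨ω', hω', rfl⟩
    exact htr1 ω' hω'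
  -- split the fidelity
  have hsplit : overlap (E (kronPow ρhat n)) ψ
      = c * overlap (E ω) ψ + overlap (E Δ) ψ := by
    have h1 : kronPow ρhat n = (c : ℂ) • ω + Δ := by rw [hΔdef]; abel
    rw [h1, map_add, _root_.map_smul, overlap_add, overlap_smul]
  set f := maxOverlap F' ψ
  have hmain : c * (1 - f) ≤ ε := by
    have h2 : c * overlap (E ω) ψ ≤ c * f := mul_le_mul_of_nonneg_left hfle hc0
    nlinarith [hfid, hsplit, hEΔ]
  refine ⟨hmain, ?_⟩
  intro hε' hlam1
  have hlogpos : 0 < Real.log (1 / lam) := by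
    apply Real.log_pos
    rw [lt_div_iff₀ hρfull, one_mul]
    exact hlam1
  rcases eq_or_lt_of_le (sub_nonneg.mpr hf1) with h1f | h1f
  · rw [← h1f]
    simp
  · have hcle : lam ^ n ≤ ε / (1 - f) := by
      rw [le_div_iff₀ h1f]
      calc lam ^ n * (1 - f) = c * (1 - f) := by rw [hcdef]
        _ ≤ ε := hmain
    have hlog : Real.log (lam ^ n) ≤ Real.log (ε / (1 - f)) :=
      Real.log_le_log (pow_pos hρfull n) hcle
    rw [div_le_iff₀ hlogpos]
    have e1 : Real.log ((1 - f) / ε) = Real.log (1 - f) - Real.log ε :=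
      Real.log_div (ne_of_gt h1f) (ne_of_gt hε')
    have e2 : Real.log (ε / (1 - f)) = Real.log ε - Real.log (1 - f) :=
      Real.log_div (ne_of_gt hε') (ne_of_gt h1f)
    have e3 : Real.log (1 / lam) = -Real.log lam := by rw [one_div, Real.log_inv]
    have e4 : Real.log (lam ^ n) = (n : ℝ) * Real.log lam := by
      rw [Real.log_pow]
    rw [e1, e3]
    rw [e2, e4] at hlog
    linarith
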